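/- Let f : ℝ → ℝ be a positive differentiable probability density with log f concave. Then the function s ↦ s·u(s), where u(s) = f'(s)/f(s), is unbounded on ℝ: for every K > 0 there exists s with |s·u(s)| > K. -/

import Mathlib

open MeasureTheory Real

theorem s_times_score_unbounded
    (f : ℝ → ℝ)
    (hpos : ∀ x, 0 < f x)
    (hdiff : Differentiable ℝ f)
    (hint : ∫ x, f x = 1)
    (hconc : ConcaveOn ℝ Set.univ (fun x => Real.log (f x))) :
    ∀ K > 0, ∃ s : ℝ, |s * (deriv f s / f s)| > K := by
  intro K hK
  by_contra h
  push_neg at h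
  -- h : ∀ s, |s * (deriv f s / f s)| ≤ K
  have hgd : ∀ x, HasDerivAt (fun x => Real.log (f x)) (deriv f x / f x) x :=
    fun x => (hdiff x).hasDerivAt.log (hpos x).ne'
  have hgdiff : Differentiable ℝ (fun x => Real.log (f x)) :=
    fun x => (hgd x).differentiableAt
  have hderiv : ∀ x, deriv (fun x => Real.log (f x)) x = deriv f x / f x :=
    fun x => (hgd x).deriv
  have hanti : AntitoneOn (deriv (fun x => Real.log (f x))) Set.univ :=
    hconc.antitoneOn_deriv (fun x _ => hgdiff x)
  -- the score is nonnegative everywhere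
  have hge : ∀ t, 0 ≤ deriv f t / f t := by
    intro t
    by_contra hneg
    push_neg at hneg
    set u := deriv f t / f t with hu
    have hu0 : 0 < -u := by linarith
    set s : ℝ := max (max t 1) (K / (-u)) + 1 with hs
    have hm1 := le_max_left t 1
    have hm2 := le_max_left (max t 1) (K / (-u))
    have hm3 := le_max_right t 1
    have hm4 := le_max_right (max t 1) (K / (-u))
    have hst : t < s := by simp only [hs]; linarith
    have hs1 : (1 : ℝ) < s := by simp only [hs]; linarith
    have hsKu : K / (-u) < s := by simp only [hs]; linarith
    have hs0 : 0 < s := lt_trans one_pos hs1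
    have hvle : deriv f s / f s ≤ u := by
      have := hanti (Set.mem_univ t) (Set.mem_univ s) hst.le
      rw [hderiv, hderiv] at this
      exact this
    set v := deriv f s / f s with hv
    have h1 : -K ≤ s * v := (abs_le.mp (h s)).1
    have h2 : K < s * (-u) := by
      have := (div_lt_iff₀ hu0).mp hsKu
      linarith [mul_comm s (-u)]
    nlinarith
  -- hence log f is monotone, so f is monotone
  have hmono : Monotone (fun x => Real.log (f x)) := by
    apply monotone_of_deriv_nonneg hgdiff
    intro x
    rw [hderiv]
    exact hge x
  have hfmono : Monotone f := by
    intro a b hab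
    have := hmono hab
    have ha := hpos a
    have hb := hpos b
    rwa [Real.log_le_log_iff ha hb] at this
  -- f is not integrable
  have hni : ¬ Integrable f := by
    intro hi
    have hI : IntegrableOn f (Set.Ioi (0:ℝ)) := hi.integrableOn
    have hconst : IntegrableOn (fun _ : ℝ => f 0) (Set.Ioi (0:ℝ)) := by
      refine hI.mono' aestronglyMeasurable_const ?_
      refine (ae_restrict_iff' measurableSet_Ioi).mpr (ae_of_all _ ?_)
      intro x hx
      rw [Real.norm_eq_abs, abs_of_pos (hpos 0)]
      exact hfmono (le_of_lt hx)
    rw [integrableOn_const_iff] at hconst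
    rcases hconst with h0 | hvol
    · exact (hpos 0).ne' (enorm_eq_zero.mp h0)
    · simp [Real.volume_Ioi] at hvol
  rw [integral_undef hni] at hint
  norm_num at hint
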